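/- Let W = (W₁ ⊕ W₂) + W_int be a row-stochastic matrix with respect to a bipartition V = V₁ ∪ V₂, where |V₁| = m₁, |V₂| = m₂, N = m₁ + m₂. Let L_⊥ = (I - (1-α)W₁' - (1-α)W₂')⁻¹ and S = (I - (1-α)L_⊥ W_int')⁻¹. Let v_n = (α/m_n)(I_n - (1-α)W_n')⁻¹𝟏_n for n = 1,2. Then the influence vector satisfies v_W = S · ((m₁/N)v₁ ⊕ (m₂/N)v₂). -/

import Mathlib

open Matrix BigOperators

/-- The influence vector of an input-output matrix over an arbitrary finite index type. -/
noncomputable def influence {ι : Type*} [Fintype ι] [DecidableEq ι]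
    (α : ℝ) (W : Matrix ι ι ℝ) : ι → ℝ :=
  (α / (Fintype.card ι : ℝ)) • ((1 - (1 - α) • Wᵀ)⁻¹ *ᵥ fun _ => 1)

lemma unit_det_aux {n : Type*} [Fintype n] [DecidableEq n]
    (α : ℝ) (hα0 : 0 < α) (hα1 : α < 1)
    (W : Matrix n n ℝ) (hnn : ∀ i j, 0 ≤ W i j) (hrow : ∀ i, ∑ j, W i j ≤ 1) :
    IsUnit (1 - (1 - α) • Wᵀ).det := by
  rw [isUnit_iff_ne_zero]
  have : (1 - (1 - α) • Wᵀ) = (1 - (1 - α) • W)ᵀ := by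
    rw [transpose_sub, transpose_smul, transpose_one]
  rw [this, det_transpose]
  apply det_ne_zero_of_sum_row_lt_diag
  intro k
  have hα : 0 < 1 - α := by linarith
  have hsum0 : 0 ≤ ∑ j, W k j := Finset.sum_nonneg (fun j _ => hnn k j)
  have hs : (1 - α) * ∑ j, W k j < 1 := by nlinarith [hrow k]
  have h1 : W k k ≤ ∑ j, W k j :=
    Finset.single_le_sum (fun j _ => hnn k j) (Finset.mem_univ k)
  have hdiag : (0:ℝ) < 1 - (1 - α) * W k k := by nlinarith
  have hoff : ∑ j ∈ Finset.univ.erase k, ‖(1 - (1 - α) • W) k j‖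
      = (1 - α) * ((∑ j, W k j) - W k k) := by
    rw [← Finset.sum_erase_eq_sub (Finset.mem_univ k), Finset.mul_sum]
    apply Finset.sum_congr rfl
    intro j hj
    have hjk : k ≠ j := (Finset.ne_of_mem_erase hj).symm
    simp only [Matrix.sub_apply, Matrix.one_apply, Matrix.smul_apply, smul_eq_mul,
      if_neg hjk, zero_sub, Real.norm_eq_abs, abs_neg]
    exact abs_of_nonneg (mul_nonneg hα.le (hnn k j))
  have hdiagn : ‖(1 - (1 - α) • W) k k‖ = 1 - (1 - α) * W k k := by
    simp only [Matrix.sub_apply, Matrix.one_apply_eq, Matrix.smul_apply, smul_eq_mul,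
      Real.norm_eq_abs]
    exact abs_of_pos hdiag
  rw [hoff, hdiagn]
  nlinarith

/-- Bipartition decomposition of the influence vector: with
`W = (W₁ ⊕ W₂) + W_int`, `L_⊥ = (I - (1-α)W₁' - (1-α)W₂')⁻¹` and the interaction
matrix `S = (I - (1-α)L_⊥ W_int')⁻¹`, one has
`v_W = S ((m₁/N) v₁ ⊕ (m₂/N) v₂)`. -/
theorem influence_bipartition (m₁ m₂ : ℕ) (hm₁ : 0 < m₁) (hm₂ : 0 < m₂)
    (α : ℝ) (hα0 : 0 < α) (hα1 : α < 1)
    (W₁ : Matrix (Fin m₁) (Fin m₁) ℝ) (W₂ : Matrix (Fin m₂) (Fin m₂) ℝ)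
    (B : Matrix (Fin m₁) (Fin m₂) ℝ) (C : Matrix (Fin m₂) (Fin m₁) ℝ)
    (hnn : ∀ i j, 0 ≤ Matrix.fromBlocks W₁ B C W₂ i j)
    (hrow : ∀ i, ∑ j, Matrix.fromBlocks W₁ B C W₂ i j = 1) :
    influence α (Matrix.fromBlocks W₁ B C W₂) =
      (1 - (1 - α) • ((1 - (1 - α) • (Matrix.fromBlocks W₁ 0 0 W₂)ᵀ)⁻¹ *
          (Matrix.fromBlocks 0 B C 0)ᵀ))⁻¹ *ᵥ
        Sum.elim (fun i => ((m₁ : ℝ) / ((m₁ : ℝ) + (m₂ : ℝ))) * influence α W₁ i)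
          (fun j => ((m₂ : ℝ) / ((m₁ : ℝ) + (m₂ : ℝ))) * influence α W₂ j) := by
  -- notation
  set P : Matrix (Fin m₁) (Fin m₁) ℝ := 1 - (1 - α) • W₁ᵀ with hP
  set Q : Matrix (Fin m₂) (Fin m₂) ℝ := 1 - (1 - α) • W₂ᵀ with hQ
  set A : Matrix (Fin m₁ ⊕ Fin m₂) (Fin m₁ ⊕ Fin m₂) ℝ :=
    1 - (1 - α) • (Matrix.fromBlocks W₁ B C W₂)ᵀ with hA
  set D : Matrix (Fin m₁ ⊕ Fin m₂) (Fin m₁ ⊕ Fin m₂) ℝ :=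
    1 - (1 - α) • (Matrix.fromBlocks W₁ 0 0 W₂)ᵀ with hD
  -- block structure facts
  have hW₁nn : ∀ i j, 0 ≤ W₁ i j := fun i j => hnn (Sum.inl i) (Sum.inl j)
  have hW₂nn : ∀ i j, 0 ≤ W₂ i j := fun i j => hnn (Sum.inr i) (Sum.inr j)
  have hBnn : ∀ i j, 0 ≤ B i j := fun i j => hnn (Sum.inl i) (Sum.inr j)
  have hCnn : ∀ i j, 0 ≤ C i j := fun i j => hnn (Sum.inr i) (Sum.inl j)
  have hrow₁ : ∀ i, ∑ j, W₁ i j ≤ 1 := by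
    intro i
    have h := hrow (Sum.inl i)
    rw [Fintype.sum_sum_type] at h
    simp only [fromBlocks_apply₁₁, fromBlocks_apply₁₂] at h
    have : 0 ≤ ∑ j, B i j := Finset.sum_nonneg (fun j _ => hBnn i j)
    linarith
  have hrow₂ : ∀ i, ∑ j, W₂ i j ≤ 1 := by
    intro i
    have h := hrow (Sum.inr i)
    rw [Fintype.sum_sum_type] at h
    simp only [fromBlocks_apply₂₁, fromBlocks_apply₂₂] at h
    have : 0 ≤ ∑ j, C i j := Finset.sum_nonneg (fun j _ => hCnn i j)
    linarith
  -- invertibility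
  have hAu : IsUnit A.det :=
    unit_det_aux α hα0 hα1 _ hnn (fun i => (hrow i).le)
  have hPu : IsUnit P.det := unit_det_aux α hα0 hα1 W₁ hW₁nn hrow₁
  have hQu : IsUnit Q.det := unit_det_aux α hα0 hα1 W₂ hW₂nn hrow₂
  -- D as block matrix
  have hDblock : D = Matrix.fromBlocks P 0 0 Q := by
    ext x y
    rcases x with i | i <;> rcases y with j | j <;>
      simp [hD, hP, hQ, Matrix.one_apply, Matrix.sub_apply, Matrix.smul_apply]
  have hDu : IsUnit D.det := by
    rw [hDblock, det_fromBlocks_zero₂₁]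
    exact hPu.mul hQu
  have hDinv : D⁻¹ = Matrix.fromBlocks P⁻¹ 0 0 Q⁻¹ := by
    apply inv_eq_right_inv
    rw [hDblock, fromBlocks_multiply]
    simp [Matrix.mul_nonsing_inv _ hPu, Matrix.mul_nonsing_inv _ hQu, fromBlocks_one]
  -- A = D - (1-α) • Oᵀ
  have hsplit : Matrix.fromBlocks W₁ B C W₂
      = Matrix.fromBlocks W₁ 0 0 W₂ + Matrix.fromBlocks 0 B C 0 := by
    rw [Matrix.fromBlocks_add]; simp
  have hAD : A = D - (1 - α) • (Matrix.fromBlocks 0 B C 0)ᵀ := by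
    rw [hA, hD, hsplit, transpose_add, smul_add]
    ring_nf
    abel
  -- inner matrix equals D⁻¹ * A
  have hinner : 1 - (1 - α) • (D⁻¹ * (Matrix.fromBlocks 0 B C 0)ᵀ) = D⁻¹ * A := by
    rw [hAD, Matrix.mul_sub, Matrix.nonsing_inv_mul _ hDu, Matrix.mul_smul]
  have hSinv : (D⁻¹ * A)⁻¹ = A⁻¹ * D := by
    rw [Matrix.mul_inv_rev, Matrix.nonsing_inv_nonsing_inv _ hDu]
  -- the RHS vector
  have hN : (0:ℝ) < (m₁ : ℝ) + (m₂ : ℝ) := by positivity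
  have hvec : (Sum.elim (fun i => ((m₁ : ℝ) / ((m₁ : ℝ) + (m₂ : ℝ))) * influence α W₁ i)
      (fun j => ((m₂ : ℝ) / ((m₁ : ℝ) + (m₂ : ℝ))) * influence α W₂ j) : Fin m₁ ⊕ Fin m₂ → ℝ)
      = (α / ((m₁ : ℝ) + (m₂ : ℝ))) • (D⁻¹ *ᵥ fun _ => 1) := by
    funext x
    rw [hDinv, Matrix.fromBlocks_mulVec]
    cases x with
    | inl i =>
        simp only [Sum.elim_inl, influence, Fintype.card_fin, Pi.smul_apply, smul_eq_mul,
          Matrix.zero_mulVec, Pi.add_apply, Pi.zero_apply, add_zero, Function.comp_def]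
        rw [← hP]
        have hm : (m₁:ℝ) ≠ 0 := Nat.cast_ne_zero.mpr hm₁.ne'
        field_simp
    | inr j =>
        simp only [Sum.elim_inr, influence, Fintype.card_fin, Pi.smul_apply, smul_eq_mul,
          Matrix.zero_mulVec, Pi.add_apply, Pi.zero_apply, zero_add, Function.comp_def]
        rw [← hQ]
        have hm : (m₂:ℝ) ≠ 0 := Nat.cast_ne_zero.mpr hm₂.ne'
        field_simp
  rw [hvec, hinner, hSinv, Matrix.mulVec_smul, Matrix.mulVec_mulVec,
    Matrix.mul_nonsing_inv_cancel_right _ _ hDu]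
  rw [influence, ← hA]
  congr 1
  simp [Fintype.card_sum]
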